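/- Let d ≥ 1 and let N ≥ 4 be an even integer. If d is even, then 0 is an eigenvalue of the discrete torus T^d_N. Moreover, if d is odd and there exists an odd prime p dividing N with p ≤ d, then 0 is an eigenvalue of T^d_N. -/

import Mathlib

/-- The multiplicity of `μ` as an eigenvalue of the discrete torus `T^d_N`:
the number of tuples `(k_1, …, k_d) ∈ {0, …, N-1}^d` with
`∑_j 2 cos(2π k_j / N) = μ`. -/
noncomputable def torusMult (N d : ℕ) (μ : ℝ) : ℕ :=
  Nat.card {k : Fin d → Fin N //
    (∑ j, 2 * Real.cos (2 * Real.pi * (k j : ℝ) / N)) = μ}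

open Finset Real

lemma sum_cos_roots (n : ℕ) (hn : 2 ≤ n) :
    ∑ i ∈ Finset.range n, Real.cos (2 * Real.pi * i / n) = 0 := by
  set z : ℂ := Complex.exp (2 * Real.pi * Complex.I / n) with hz
  have hprim : IsPrimitiveRoot z n := by
    simpa [hz] using Complex.isPrimitiveRoot_exp n (by omega)
  have hz1 : z ≠ 1 := by
    intro h
    have := hprim.pow_ne_one_of_pos_of_lt (by norm_num) (by omega : 1 < n)
    simp [h] at this
  have hgeom : ∑ i ∈ Finset.range n, z ^ i = 0 := by
    have := geom_sum_eq hz1 n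
    rw [this, hprim.pow_eq_one]
    simp
  have hre : ∀ i : ℕ, (z ^ i).re = Real.cos (2 * Real.pi * i / n) := by
    intro i
    rw [hz, ← Complex.exp_nat_mul]
    have : (i : ℂ) * (2 * Real.pi * Complex.I / n) =
        ((2 * Real.pi * i / n : ℝ) : ℂ) * Complex.I := by
      push_cast; ring
    rw [this, Complex.exp_ofReal_mul_I_re]
  calc ∑ i ∈ Finset.range n, Real.cos (2 * Real.pi * i / n)
      = (∑ i ∈ Finset.range n, z ^ i).re := by
        rw [Complex.re_sum]; exact (Finset.sum_congr rfl fun i _ => (hre i).symm)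
    _ = 0 := by rw [hgeom]; rfl

section
variable (N : ℕ)

def SumZero (d : ℕ) : Prop :=
  ∃ k : Fin d → Fin N, (∑ j, 2 * Real.cos (2 * Real.pi * (k j : ℝ) / N)) = 0

lemma sumZero_zero : SumZero N 0 := ⟨Fin.elim0, by simp⟩

lemma cos_half (hN : 4 ≤ N) (hNe : Even N) :
    Real.cos (2 * Real.pi * ((N / 2 : ℕ) : ℝ) / N) = -1 := by
  have h2 : (2 : ℕ) ∣ N := hNe.two_dvd
  have h1 : ((N / 2 : ℕ) : ℝ) = (N : ℝ) / 2 := by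
    rw [Nat.cast_div h2 (by norm_num)]; norm_num
  rw [h1]
  have hN0 : (N : ℝ) ≠ 0 := by positivity
  have h3 : 2 * Real.pi * ((N : ℝ) / 2) / N = Real.pi := by field_simp
  rw [h3, Real.cos_pi]

lemma sumZero_step (hN : 4 ≤ N) (hNe : Even N) (d : ℕ) (h : SumZero N d) :
    SumZero N (d + 2) := by
  obtain ⟨k, hk⟩ := h
  have hlt : N / 2 < N := Nat.div_lt_self (by omega) (by norm_num)
  refine ⟨Fin.snoc (Fin.snoc k ⟨0, by omega⟩) ⟨N / 2, hlt⟩, ?_⟩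
  rw [Fin.sum_univ_castSucc, Fin.sum_univ_castSucc]
  simp only [Fin.snoc_castSucc, Fin.snoc_last]
  rw [hk]
  simp [cos_half N hN hNe]

lemma sumZero_prime (hN : 4 ≤ N) (p : ℕ) (hp : p.Prime) (hdvd : p ∣ N) :
    SumZero N p := by
  have hp2 : 2 ≤ p := hp.two_le
  have hp0 : (p : ℝ) ≠ 0 := by positivity
  have hN0 : (N : ℝ) ≠ 0 := by positivity
  have hlt : ∀ i : Fin p, N / p * i < N := by
    intro i
    have hq : 0 < N / p := Nat.div_pos (Nat.le_of_dvd (by omega) hdvd) (by omega)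
    calc N / p * i < N / p * p := Nat.mul_lt_mul_of_pos_left i.isLt hq
      _ = N := Nat.div_mul_cancel hdvd
  refine ⟨fun i => ⟨N / p * i, hlt i⟩, ?_⟩
  have key : ∀ j : Fin p,
      2 * Real.cos (2 * Real.pi * (((⟨N / p * j, hlt j⟩ : Fin N) : ℕ) : ℝ) / N)
      = 2 * Real.cos (2 * Real.pi * (j : ℕ) / p) := by
    intro j
    congr 1
    have hNp : ((N / p : ℕ) : ℝ) = (N : ℝ) / p := by
      rw [Nat.cast_div hdvd hp0]
    have : (((⟨N / p * j, hlt j⟩ : Fin N) : ℕ) : ℝ) = (N : ℝ) / p * j := by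
      push_cast [hNp]; ring
    rw [this]
    congr 1
    field_simp
  calc (∑ j : Fin p, 2 * Real.cos (2 * Real.pi * (((⟨N / p * (j:ℕ), hlt j⟩ : Fin N) : ℕ) : ℝ) / N))
      = ∑ j : Fin p, 2 * Real.cos (2 * Real.pi * (j : ℕ) / p) :=
        Finset.sum_congr rfl fun j _ => key j
    _ = 2 * ∑ j ∈ Finset.range p, Real.cos (2 * Real.pi * j / p) := by
        rw [Fin.sum_univ_eq_sum_range (fun j => 2 * Real.cos (2 * Real.pi * j / p)) p,
          Finset.mul_sum]
    _ = 0 := by rw [sum_cos_roots p hp2]; ring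

lemma sumZero_add_even (hN : 4 ≤ N) (hNe : Even N) (d m : ℕ) (h : SumZero N d) :
    SumZero N (d + 2 * m) := by
  induction m with
  | zero => simpa using h
  | succ m ih =>
    have h1 : d + 2 * (m + 1) = d + 2 * m + 2 := by ring
    rw [h1]
    exact sumZero_step N hN hNe _ ih

lemma sumZero_even (hN : 4 ≤ N) (hNe : Even N) (m : ℕ) : SumZero N (2 * m) := by
  induction m with
  | zero => exact sumZero_zero N
  | succ m ih =>
    have : 2 * (m + 1) = 2 * m + 2 := by ring
    rw [this]
    exact sumZero_step N hN hNe _ ih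
end

lemma torusMult_pos_of_sumZero {N d : ℕ} (h : SumZero N d) : 1 ≤ torusMult N d 0 := by
  obtain ⟨k, hk⟩ := h
  have : Nonempty {k : Fin d → Fin N //
      (∑ j, 2 * Real.cos (2 * Real.pi * (k j : ℝ) / N)) = 0} := ⟨⟨k, hk⟩⟩
  exact Nat.card_pos

theorem zero_eigenvalue_even_N (N d : ℕ) (hd : 1 ≤ d) (hN : 4 ≤ N) (hNe : Even N) :
    (Even d → 1 ≤ torusMult N d 0) ∧
    (Odd d → (∃ p : ℕ, p.Prime ∧ Odd p ∧ p ∣ N ∧ p ≤ d) → 1 ≤ torusMult N d 0) := by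
  constructor
  · intro hde
    obtain ⟨m, hm⟩ := hde
    have : d = 2 * m := by omega
    subst this
    exact torusMult_pos_of_sumZero (sumZero_even N hN hNe m)
  · rintro hdo ⟨p, hp, hpo, hdvd, hpd⟩
    have hpar : Even (d - p) := Nat.Odd.sub_odd hdo hpo
    obtain ⟨m, hm⟩ := hpar
    have hd' : d = p + 2 * m := by omega
    subst hd'
    exact torusMult_pos_of_sumZero
      (sumZero_add_even N hN hNe p m (sumZero_prime N hN p hp hdvd))
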